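/- arXiv:1210.5916 — 2 statements merged into one kernel-verified Lean document; each statement's English description precedes it below -/
import Mathlib

section
/- Kronecker's theorem on unitary lattice automorphisms: a subgroup G of GL(n, ℂ) that preserves both a positive-definite Hermitian form and a full-rank lattice (a finitely generated subgroup of ℂⁿ spanning ℂⁿ over ℂ, preserved setwise by G) is finite. -/
open scoped Matrix ComplexOrder
/-- **Kronecker's theorem on unitary lattice automorphisms.**
A subgroup `G` of `GL(n, ℂ)` that preserves a positive-definite Hermitian form `B`
(i.e. `gᴴ B g = B` for all `g ∈ G`) and preserves setwise a full-rank lattice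
`L ⊆ ℂⁿ` (a finitely generated, discrete additive subgroup spanning `ℂⁿ` over `ℂ`)
is finite. -/
theorem stmt_5 (n : ℕ) (G : Subgroup (Matrix.GeneralLinearGroup (Fin n) ℂ))
    (B : Matrix (Fin n) (Fin n) ℂ) (hB : B.PosDef)
    (hGB : ∀ g ∈ G, (g : Matrix (Fin n) (Fin n) ℂ)ᴴ * B * (g : Matrix (Fin n) (Fin n) ℂ) = B)
    (L : AddSubgroup (Fin n → ℂ)) (hLfg : L.FG) (hLdisc : DiscreteTopology L)
    (hLspan : Submodule.span ℂ (L : Set (Fin n → ℂ)) = ⊤)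
    (hGL : ∀ g ∈ G, (fun v => (g : Matrix (Fin n) (Fin n) ℂ).mulVec v) '' (L : Set (Fin n → ℂ))
      = (L : Set (Fin n → ℂ))) :
    Finite G := by
  rcases Nat.eq_zero_or_pos n with hn | hn
  · subst hn
    haveI : Subsingleton (Matrix.GeneralLinearGroup (Fin 0) ℂ) :=
      ⟨fun a b => Units.ext (Subsingleton.elim _ _)⟩
    exact Finite.of_injective (fun g : G => (g : Matrix.GeneralLinearGroup (Fin 0) ℂ))
      Subtype.val_injective
  obtain ⟨S, hS⟩ := hLfg
  -- the quadratic form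
  set f : (Fin n → ℂ) → ℝ := fun v => (star v ⬝ᵥ B.mulVec v).re with hf
  have hf_cont : Continuous f := by
    apply Complex.continuous_re.comp
    exact (continuous_star).dotProduct (continuous_const.matrix_mulVec continuous_id)
  have hf_pos : ∀ v : Fin n → ℂ, v ≠ 0 → 0 < f v := by
    intro v hv
    have := hB.dotProduct_mulVec_pos hv
    rw [Complex.lt_def] at this
    simpa using this.1
  -- invariance of f under G
  have hf_inv : ∀ g ∈ G, ∀ v : Fin n → ℂ,
      f ((g : Matrix (Fin n) (Fin n) ℂ).mulVec v) = f v := by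
    intro g hg v
    have : star ((g : Matrix (Fin n) (Fin n) ℂ).mulVec v) ⬝ᵥ
        B.mulVec ((g : Matrix (Fin n) (Fin n) ℂ).mulVec v) = star v ⬝ᵥ B.mulVec v := by
      conv_rhs => rw [← hGB g hg]
      simp [Matrix.star_mulVec, Matrix.dotProduct_mulVec, Matrix.vecMul_vecMul, Matrix.mul_assoc]
    simp only [hf]
    rw [this]
  -- scaling
  have hf_smul : ∀ (r : ℝ) (v : Fin n → ℂ), f ((r : ℂ) • v) = r ^ 2 * f v := by
    intro r v
    have : star ((r : ℂ) • v) ⬝ᵥ B.mulVec ((r : ℂ) • v)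
        = ((r : ℂ) ^ 2) * (star v ⬝ᵥ B.mulVec v) := by
      rw [star_smul, Matrix.mulVec_smul, smul_dotProduct, dotProduct_smul]
      simp [smul_smul, sq]
      ring
    simp only [hf, this]
    rw [show ((r : ℂ) ^ 2) = ((r ^ 2 : ℝ) : ℂ) by push_cast; ring, Complex.re_ofReal_mul]
  -- lower bound on f via minimum over the unit sphere
  haveI : Nonempty (Fin n) := ⟨⟨0, hn⟩⟩
  have hsph : (Metric.sphere (0 : Fin n → ℂ) 1).Nonempty :=
    NormedSpace.sphere_nonempty.2 zero_le_one
  obtain ⟨x₀, hx₀, hmin⟩ := (isCompact_sphere (0 : Fin n → ℂ) 1).exists_isMinOn hsph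
    hf_cont.continuousOn
  set m : ℝ := f x₀ with hm
  have hx₀norm : ‖x₀‖ = 1 := by simpa using hx₀
  have hmpos : 0 < m := hf_pos x₀ (by intro h; rw [h] at hx₀norm; simp at hx₀norm)
  have hlow : ∀ v : Fin n → ℂ, m * ‖v‖ ^ 2 ≤ f v := by
    intro v
    rcases eq_or_ne v 0 with rfl | hv
    · simp [hf]
    · have hnv : (0 : ℝ) < ‖v‖ := norm_pos_iff.2 hv
      set u : Fin n → ℂ := ((‖v‖⁻¹ : ℝ) : ℂ) • v with hu
      have hunorm : ‖u‖ = 1 := by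
        rw [hu, norm_smul]
        simp [abs_of_pos (inv_pos.2 hnv), inv_mul_cancel₀ hnv.ne']
      have h1 : m ≤ f u := hmin (by simp [hunorm])
      have h2 : f u = ‖v‖⁻¹ ^ 2 * f v := hf_smul _ v
      rw [h2] at h1
      have := mul_le_mul_of_nonneg_left h1 (le_of_lt (pow_pos hnv 2))
      calc m * ‖v‖ ^ 2 = ‖v‖ ^ 2 * m := by ring
        _ ≤ ‖v‖ ^ 2 * (‖v‖⁻¹ ^ 2 * f v) := this
        _ = f v := by field_simp
  -- a bound c for f on S
  obtain ⟨c, hc⟩ := (S.image f).exists_le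
  have hcS : ∀ s ∈ S, f s ≤ c := fun s hs => hc _ (Finset.mem_image_of_mem f hs)
  -- the finite trapping set
  set T : Set (Fin n → ℂ) := {v | v ∈ L ∧ f v ≤ c} with hT
  have hTL : T ⊆ (L : Set (Fin n → ℂ)) := fun v hv => hv.1
  have hTfin : T.Finite := by
    have hclosed : IsClosed T := by
      have h1 : IsClosed (L : Set (Fin n → ℂ)) := AddSubgroup.isClosed_of_discrete
      have h2 : IsClosed {v : Fin n → ℂ | f v ≤ c} := isClosed_le hf_cont continuous_const
      exact h1.inter h2
    have hbdd : T ⊆ Metric.closedBall 0 (Real.sqrt (c / m)) := by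
      intro v hv
      rw [Metric.mem_closedBall, dist_zero_right]
      have h1 : m * ‖v‖ ^ 2 ≤ c := le_trans (hlow v) hv.2
      have h2 : ‖v‖ ^ 2 ≤ c / m := (le_div_iff₀' hmpos).2 h1
      calc ‖v‖ = Real.sqrt (‖v‖ ^ 2) := by rw [Real.sqrt_sq (norm_nonneg v)]
        _ ≤ Real.sqrt (c / m) := Real.sqrt_le_sqrt h2
    have hcomp : IsCompact T :=
      (isCompact_closedBall _ _).of_isClosed_subset hclosed hbdd
    exact hcomp.finite (isDiscrete_iff_discreteTopology.mpr (DiscreteTopology.of_subset hLdisc hTL))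
  -- the injection
  haveI : Finite T := hTfin.to_subtype
  haveI : Finite (S : Set (Fin n → ℂ)) := S.finite_toSet.to_subtype
  have hSL : (S : Set (Fin n → ℂ)) ⊆ (L : Set (Fin n → ℂ)) := by
    rw [← hS]; exact AddSubgroup.subset_closure
  have hmem : ∀ (g : G) (s : (S : Set (Fin n → ℂ))),
      ((g : Matrix.GeneralLinearGroup (Fin n) ℂ) : Matrix (Fin n) (Fin n) ℂ).mulVec s ∈ T := by
    intro g s
    constructor
    · have : ((g : Matrix.GeneralLinearGroup (Fin n) ℂ) : Matrix (Fin n) (Fin n) ℂ).mulVec s ∈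
          (fun v => ((g : Matrix.GeneralLinearGroup (Fin n) ℂ) : Matrix (Fin n) (Fin n) ℂ).mulVec v)
          '' (L : Set (Fin n → ℂ)) := ⟨s, hSL s.2, rfl⟩
      rw [hGL _ g.2] at this
      exact this
    · rw [hf_inv _ g.2]
      exact hcS s s.2
  have hspanS : Submodule.span ℂ (S : Set (Fin n → ℂ)) = ⊤ := by
    refine top_unique ?_
    rw [← hLspan]
    refine Submodule.span_le.2 ?_
    intro v hv
    have : AddSubgroup.closure (S : Set (Fin n → ℂ)) ≤
        (Submodule.span ℂ (S : Set (Fin n → ℂ))).toAddSubgroup :=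
      (AddSubgroup.closure_le _).2 Submodule.subset_span
    rw [hS] at this
    exact this hv
  refine Finite.of_injective
    (fun g : G => (fun s : (S : Set (Fin n → ℂ)) =>
      (⟨((g : Matrix.GeneralLinearGroup (Fin n) ℂ) : Matrix (Fin n) (Fin n) ℂ).mulVec s,
        hmem g s⟩ : T))) ?_
  intro g₁ g₂ h
  have hmv : ∀ s ∈ (S : Set (Fin n → ℂ)),
      ((g₁ : Matrix.GeneralLinearGroup (Fin n) ℂ) : Matrix (Fin n) (Fin n) ℂ).mulVec s =
      ((g₂ : Matrix.GeneralLinearGroup (Fin n) ℂ) : Matrix (Fin n) (Fin n) ℂ).mulVec s := by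
    intro s hs
    have := congrFun h ⟨s, hs⟩
    exact congrArg Subtype.val this
  have hlin : Matrix.toLin' ((g₁ : Matrix.GeneralLinearGroup (Fin n) ℂ) : Matrix (Fin n) (Fin n) ℂ)
      = Matrix.toLin' ((g₂ : Matrix.GeneralLinearGroup (Fin n) ℂ) : Matrix (Fin n) (Fin n) ℂ) :=
    LinearMap.ext_on hspanS (fun x hx => by simpa [Matrix.toLin'_apply] using hmv x hx)
  have hmat := Matrix.toLin'.injective hlin
  exact Subtype.ext (Units.ext hmat)
end

section
/- Every algebraic complex number all of whose Galois conjugates have absolute value 1 and which is an algebraic integer is a root of unity (Kronecker's theorem). -/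
open IntermediateField in

/-- **Kronecker's theorem.** An algebraic integer `α ∈ ℂ` all of whose Galois
conjugates (the complex roots of its minimal polynomial over `ℚ`) have absolute
value `1` is a root of unity. -/
theorem stmt_6 (α : ℂ) (hint : IsIntegral ℤ α)
    (hconj : ∀ β : ℂ, Polynomial.aeval β (minpoly ℚ α) = 0 → ‖β‖ = 1) :
    ∃ n : ℕ, 0 < n ∧ α ^ n = 1 := by
  have hQ : IsIntegral ℚ α := hint.tower_top
  let K := ℚ⟮α⟯
  haveI : FiniteDimensional ℚ K := IntermediateField.adjoin.finiteDimensional hQ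
  haveI : NumberField K := ⟨⟩
  set x : K := IntermediateField.AdjoinSimple.gen ℚ α with hxdef
  have hmap : (algebraMap K ℂ) x = α := rfl
  have hxi : IsIntegral ℤ x :=
    (isIntegral_algHom_iff (IsScalarTower.toAlgHom ℤ (↥K) ℂ)
      (algebraMap (↥K) ℂ).injective).mp (by simpa [hmap] using hint)
  have hminpoly : minpoly ℚ x = minpoly ℚ α :=
    IntermediateField.minpoly_gen ℚ α
  have hx : ∀ φ : K →+* ℂ, ‖φ x‖ = 1 := by
    intro φ
    have hmem : φ x ∈ (minpoly ℚ x).rootSet ℂ := by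
      rw [← NumberField.Embeddings.range_eval_eq_rootSet_minpoly K ℂ x]
      exact ⟨φ, rfl⟩
    rw [Polynomial.mem_rootSet] at hmem
    rw [hminpoly] at hmem
    exact hconj _ hmem.2
  obtain ⟨n, hn, hpow⟩ := NumberField.Embeddings.pow_eq_one_of_norm_eq_one K ℂ hxi hx
  refine ⟨n, hn, ?_⟩
  have := congrArg (algebraMap K ℂ) hpow
  simpa [hmap, hxdef] using this
end
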